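/- Let X be a path-connected Hausdorff space containing a closed path-connected subspace A such that X \ A can be deformed within X to a discrete subspace of X, i.e., there is a continuous map H : (X \ A) × [0,1] → X with H(x,0) = x for all x ∈ X \ A and with H(−,1) taking values in a discrete subspace of X. Then cat(X) ≤ cat(A) + 1. -/

import Mathlib

open Set unitInterval Topology

/-- A point `x` of a topological space `X` is a *wild point* of `X` if every neighborhood `U`
of `x` contains a loop that is not null-homotopic in `X`. -/
def IsWildPoint {X : Type*} [TopologicalSpace X] (x : X) : Prop :=
  ∀ U ∈ 𝓝 x, ∃ (y : X) (γ : Path y y), Set.range ⇑γ ⊆ U ∧ ¬ γ.Homotopic (Path.refl y)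

/-- The set of wild points of `X`. -/
def wildSet (X : Type*) [TopologicalSpace X] : Set X := {x | IsWildPoint x}

/-- Iterated wild sets: `iterWild X 0 = X` and `iterWild X (n+1) = w(iterWild X n)`,
where the wild set of the subspace is taken with the subspace topology. -/
def iterWild (X : Type*) [TopologicalSpace X] : ℕ → Set X
  | 0 => Set.univ
  | n + 1 => Subtype.val '' wildSet ↥(iterWild X n)

/-- The wildness rank of `X`: the least `n` with `iterWild X n = ∅`, and `⊤` if none exists. -/
noncomputable def wildRank (X : Type*) [TopologicalSpace X] : ℕ∞ :=
  sInf ((↑) '' {n : ℕ | iterWild X n = ∅})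

/-- `X` is `w`-stable if every iterated wild set is locally path-connected. -/
def WStable (X : Type*) [TopologicalSpace X] : Prop :=
  ∀ n : ℕ, LocPathConnectedSpace ↥(iterWild X n)

/-- `X` has Lebesgue covering dimension at most one: every open cover admits an open
refinement which covers `X` and in which every point lies in at most two members. -/
def DimLEOne (X : Type*) [TopologicalSpace X] : Prop :=
  ∀ 𝒰 : Set (Set X), (∀ U ∈ 𝒰, IsOpen U) → ⋃₀ 𝒰 = Set.univ →
    ∃ 𝒱 : Set (Set X), (∀ V ∈ 𝒱, IsOpen V) ∧ ⋃₀ 𝒱 = Set.univ ∧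
      (∀ V ∈ 𝒱, ∃ U ∈ 𝒰, V ⊆ U) ∧
      ∀ x : X, ∃ V₁ V₂ : Set X, ∀ V ∈ 𝒱, x ∈ V → V = V₁ ∨ V = V₂

/-- A subset `A ⊆ X` is categorical in `X` if the inclusion `A → X` is homotopic to a
constant map. -/
def IsCategorical (X : Type*) [TopologicalSpace X] (A : Set X) : Prop :=
  ∃ y : X, ContinuousMap.Homotopic
    (⟨Subtype.val, continuous_subtype_val⟩ : C(↥A, X)) (ContinuousMap.const ↥A y)

/-- `A ⊆ X × X` admits a motion plan in `X` if the two coordinate projections `A → X`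
are homotopic. -/
def AdmitsMotionPlan (X : Type*) [TopologicalSpace X] (A : Set (X × X)) : Prop :=
  ContinuousMap.Homotopic
    (⟨fun p : A => (p : X × X).1, continuous_fst.comp continuous_subtype_val⟩ : C(↥A, X))
    (⟨fun p : A => (p : X × X).2, continuous_snd.comp continuous_subtype_val⟩ : C(↥A, X))

/-- The normalized Lusternik–Schnirelmann category of `X`, defined via closed filtrations
`∅ = F₋₁ ⊆ F 0 ⊆ ⋯ ⊆ F n = X` with categorical differences. -/
noncomputable def LSCat (X : Type*) [TopologicalSpace X] : ℕ∞ :=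
  sInf ((↑) '' {n : ℕ | ∃ F : ℕ → Set X, Monotone F ∧ (∀ j, IsClosed (F j)) ∧
    F n = Set.univ ∧ IsCategorical X (F 0) ∧ ∀ j < n, IsCategorical X (F (j + 1) \ F j)})

/-- The normalized topological complexity of `X`, defined via closed filtrations of `X × X`
whose differences admit motion plans. -/
noncomputable def TopComplexity (X : Type*) [TopologicalSpace X] : ℕ∞ :=
  sInf ((↑) '' {n : ℕ | ∃ F : ℕ → Set (X × X), Monotone F ∧ (∀ j, IsClosed (F j)) ∧
    F n = Set.univ ∧ AdmitsMotionPlan X (F 0) ∧ ∀ j < n, AdmitsMotionPlan X (F (j + 1) \ F j)})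

/-- The relative LS-category `cat_X(A)` defined via filtrations of `A` by subsets closed in `A`
whose differences are categorical in `X`. -/
noncomputable def relCat (X : Type*) [TopologicalSpace X] (A : Set X) : ℕ∞ :=
  sInf ((↑) '' {n : ℕ | ∃ F : ℕ → Set X, Monotone F ∧ (∀ j, F j ⊆ A) ∧
    (∀ j, IsClosed ((Subtype.val ⁻¹' F j : Set ↥A))) ∧ F n = A ∧
    IsCategorical X (F 0) ∧ ∀ j < n, IsCategorical X (F (j + 1) \ F j)})

/-- A simple closed curve in `X` is a subspace homeomorphic to the circle. -/
def IsSimpleClosedCurve {X : Type*} [TopologicalSpace X] (S : Set X) : Prop :=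
  Nonempty (↥S ≃ₜ Circle)

/-- A continuous map is `π₁`-injective if every based loop whose image is null-homotopic is
itself null-homotopic (equivalently, the induced homomorphism on fundamental groups is
injective at every basepoint). -/
def Pi1Injective {X Y : Type*} [TopologicalSpace X] [TopologicalSpace Y] (f : C(X, Y)) : Prop :=
  ∀ (x : X) (γ : Path x x), (γ.map f.continuous).Homotopic (Path.refl (f x)) →
    γ.Homotopic (Path.refl x)

section aux
variable {X : Type*} [TopologicalSpace X]

lemma memA {A : Set X} {S : Set ↥A} {x : X} (h : x ∈ Subtype.val '' S) : x ∈ A := by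
  obtain ⟨a, -, rfl⟩ := h; exact a.2

lemma memS {A : Set X} {S : Set ↥A} {x : X} (h : x ∈ Subtype.val '' S) :
    (⟨x, memA h⟩ : ↥A) ∈ S := by
  obtain ⟨a, ha, rfl⟩ := h
  have : (⟨a.1, memA ⟨a, ha, rfl⟩⟩ : ↥A) = a := Subtype.ext rfl
  rwa [this]

def imgHomeo {A : Set X} (S : Set ↥A) : ↥S ≃ₜ ↥(Subtype.val '' S : Set X) where
  toFun x := ⟨x.1.1, ⟨x.1, x.2, rfl⟩⟩
  invFun p := ⟨⟨p.1, memA p.2⟩, memS p.2⟩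
  left_inv x := by ext; rfl
  right_inv p := by ext; rfl
  continuous_toFun := Continuous.subtype_mk (continuous_subtype_val.comp continuous_subtype_val) _
  continuous_invFun := Continuous.subtype_mk (Continuous.subtype_mk continuous_subtype_val _) _

lemma isCategorical_image {A : Set X} {S : Set ↥A} (h : IsCategorical ↥A S) :
    IsCategorical X (Subtype.val '' S) := by
  obtain ⟨y, hy⟩ := h
  refine ⟨(y : X), ?_⟩
  have h1 := ContinuousMap.Homotopic.comp
    (hf := ContinuousMap.Homotopic.refl ((imgHomeo S).symm : C(↥(Subtype.val '' S : Set X), ↥S)))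
    (hg := ContinuousMap.Homotopic.comp (hf := hy)
      (hg := ContinuousMap.Homotopic.refl (⟨Subtype.val, continuous_subtype_val⟩ : C(↥A, X))))
  convert h1 using 2 <;> ext p <;> rfl

end aux

lemma isCategorical_compl {X : Type*} [TopologicalSpace X] [PathConnectedSpace X]
    (A : Set X) (H : C(↥Aᶜ × unitInterval, X))
    (h0 : ∀ x : ↥Aᶜ, H (x, 0) = (x : X))
    (h1 : ∃ D : Set X, DiscreteTopology ↥D ∧ ∀ x : ↥Aᶜ, H (x, 1) ∈ D) :
    IsCategorical X Aᶜ := by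
  obtain ⟨D, hD, hmem⟩ := h1
  obtain ⟨y⟩ : Nonempty X := PathConnectedSpace.nonempty
  refine ⟨y, ?_⟩
  have hg : Continuous fun x : ↥Aᶜ => H (x, 1) :=
    H.continuous.comp (continuous_id.prodMk continuous_const)
  set g : C(↥Aᶜ, X) := ⟨fun x => H (x, 1), hg⟩ with hgdef
  have step1 : (⟨Subtype.val, continuous_subtype_val⟩ : C(↥Aᶜ, X)).Homotopic g :=
    ⟨{ toFun := fun p => H (p.2, p.1)
       continuous_toFun := H.continuous.comp (continuous_snd.prodMk continuous_fst)
       map_zero_left := h0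
       map_one_left := fun x => rfl }⟩
  set g' : ↥Aᶜ → ↥D := fun x => ⟨H (x, 1), hmem x⟩ with hg'def
  have hg' : Continuous g' := Continuous.subtype_mk hg _
  set P : ↥D → C(unitInterval, X) :=
    fun d => (PathConnectedSpace.somePath (d : X) y : C(unitInterval, X)) with hPdef
  have hP : Continuous P := continuous_of_discreteTopology
  have step2 : g.Homotopic (ContinuousMap.const ↥Aᶜ y) :=
    ⟨{ toFun := fun p => P (g' p.2) p.1
       continuous_toFun := by
         exact continuous_eval.comp ((hP.comp (hg'.comp continuous_snd)).prodMk continuous_fst)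
       map_zero_left := fun x => by simp [hPdef]; rfl
       map_one_left := fun x => by simp [hPdef] }⟩
  exact step1.trans step2


/-- If `A ⊆ X` is a closed path-connected subspace such that `X \ A` can be deformed within `X`
to a discrete subspace of `X`, then `cat(X) ≤ cat(A) + 1`. -/
theorem lscat_le_of_deform_to_discrete (X : Type*) [TopologicalSpace X] [T2Space X]
    [PathConnectedSpace X] (A : Set X) (hAcl : IsClosed A) (hApc : IsPathConnected A)
    (H : C(↥Aᶜ × unitInterval, X))
    (h0 : ∀ x : ↥Aᶜ, H (x, 0) = (x : X))
    (h1 : ∃ D : Set X, DiscreteTopology ↥D ∧ ∀ x : ↥Aᶜ, H (x, 1) ∈ D) :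
    LSCat X ≤ LSCat ↥A + 1 := by
  set SA := {n : ℕ | ∃ F : ℕ → Set ↥A, Monotone F ∧ (∀ j, IsClosed (F j)) ∧
    F n = Set.univ ∧ IsCategorical ↥A (F 0) ∧ ∀ j < n, IsCategorical ↥A (F (j + 1) \ F j)}
      with hSA
  by_cases hne : SA.Nonempty
  · set m := sInf SA with hmdef
    obtain ⟨F, hmono, hcl, htop, hcat0, hcat⟩ := Nat.sInf_mem hne
    -- build filtration for X
    set F' : ℕ → Set X := fun j => if j ≤ m then Subtype.val '' F j else univ with hF'
    have hmem : (↑(m + 1) : ℕ∞) ∈ ((↑) '' {n : ℕ | ∃ F : ℕ → Set X, Monotone F ∧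
        (∀ j, IsClosed (F j)) ∧ F n = Set.univ ∧ IsCategorical X (F 0) ∧
        ∀ j < n, IsCategorical X (F (j + 1) \ F j)}) := by
      refine ⟨m + 1, ⟨F', ?_, ?_, ?_, ?_, ?_⟩, rfl⟩
      · intro j k hjk
        by_cases hk : k ≤ m
        · rw [hF']; simp only [if_pos (hjk.trans hk), if_pos hk]
          exact Set.image_mono (hmono hjk)
        · rw [hF']; simp only [if_neg hk]; exact Set.subset_univ _
      · intro j
        by_cases hj : j ≤ m
        · rw [hF']; simp only [if_pos hj]
          exact (hAcl.isClosedEmbedding_subtypeVal).isClosedMap _ (hcl j)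
        · rw [hF']; simp only [if_neg hj]; exact isClosed_univ
      · rw [hF']; simp only [if_neg (by omega : ¬ m + 1 ≤ m)]
      · rw [hF']; simp only [if_pos (Nat.zero_le m)]
        exact isCategorical_image hcat0
      · intro j hj
        by_cases hj' : j < m
        · have e1 : F' (j + 1) = Subtype.val '' F (j + 1) := if_pos (by omega)
          have e2 : F' j = Subtype.val '' F j := if_pos (by omega)
          rw [e1, e2, ← Set.image_diff Subtype.val_injective]
          exact isCategorical_image (hcat j hj')
        · have hjm : j = m := by omega
          subst hjm
          have e1 : F' (m + 1) = univ := if_neg (by omega)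
          have e2 : F' m = A := by
            rw [hF']; simp only [if_pos (le_refl m)]; rw [hmdef, htop, Subtype.coe_image_univ]
          rw [e1, e2, show (univ : Set X) \ A = Aᶜ by ext x; simp]
          exact isCategorical_compl A H h0 h1
    have h1' : LSCat X ≤ (↑(m + 1) : ℕ∞) := sInf_le hmem
    have h2' : (↑m : ℕ∞) ≤ LSCat ↥A := by
      apply le_sInf
      rintro b ⟨k, hk, rfl⟩
      exact_mod_cast Nat.sInf_le hk
    calc LSCat X ≤ (↑(m + 1) : ℕ∞) := h1'
      _ = (↑m : ℕ∞) + 1 := by push_cast; ring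
      _ ≤ LSCat ↥A + 1 := add_le_add_left h2' 1
  · have hempty : ((↑) '' SA : Set ℕ∞) = ∅ := by
      rw [Set.not_nonempty_iff_eq_empty.mp hne, Set.image_empty]
    have htopA : LSCat ↥A = ⊤ := by
      have heq : LSCat ↥A = sInf ((↑) '' SA : Set ℕ∞) := rfl
      rw [heq, hempty, sInf_empty]
    rw [htopA]
    exact le_top
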